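/- Let K be a field satisfying the ℚ₂-norm-lattice hypotheses (as in the previous statement, with basis -1,2,5 of K^×/(K^×)², the specified norm groups, and 3 ∼ -5). Let O₁ = {x ∈ K : x ∉ N(5), 1 + x ∈ N(5)} ∪ {0}. If for every x ∈ O₁, 1 + 2x ∈ N(5) and 1 + 4x ∈ N(5), then O₁ is closed under multiplication by -1, 5, and 1/5. -/

import Mathlib

namespace Stmt13

variable {K : Type*} [Field K] [CharZero K]

/-- All the structural hypotheses bundled. -/
structure Setup (K : Type*) [Field K] [CharZero K] where
  N : K → Set K
  Sp : K → K → Set K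
  hN : ∀ a : K, N a = {x : K | x ≠ 0 ∧ ∃ u v : K, x = u ^ 2 - a * v ^ 2}
  hSp : ∀ a b : K, Sp a b =
      {x : K | ∃ (i j : ℕ) (z : K), z ≠ 0 ∧ x = a ^ i * b ^ j * z ^ 2}
  hbasis : ∀ x : K, x ≠ 0 → ∃! t : Bool × Bool × Bool, ∃ z : K, z ≠ 0 ∧
      x = (if t.1 then (-1 : K) else 1) * (if t.2.1 then 2 else 1) *
          (if t.2.2 then 5 else 1) * z ^ 2
  h1 : N (-1) = Sp 2 5
  h2 : N 2 = Sp (-1) 2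
  h3 : N 5 = Sp (-1) 5
  h4 : N 10 = Sp (-1) 10
  h5 : N (-2) = Sp 2 (-5)
  h6 : N (-5) = Sp (-2) 5
  h7 : N (-10) = Sp (-2) (-5)
  h35 : ∃ z : K, z ≠ 0 ∧ (3 : K) = -5 * z ^ 2

/-- square-class representation -/
def Rep (x : K) (t : Bool × Bool × Bool) : Prop :=
  ∃ z : K, z ≠ 0 ∧
      x = (if t.1 then (-1 : K) else 1) * (if t.2.1 then 2 else 1) *
          (if t.2.2 then 5 else 1) * z ^ 2

lemma rep_ne {x : K} {t} (h : Rep x t) : x ≠ 0 := by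
  obtain ⟨z, hz, rfl⟩ := h
  obtain ⟨a, b, c⟩ := t
  cases a <;> cases b <;> cases c <;> simp_all <;> norm_num

lemma rep_one : Rep (1 : K) (false, false, false) := ⟨1, one_ne_zero, by norm_num⟩
lemma rep_m1 : Rep (-1 : K) (true, false, false) := ⟨1, one_ne_zero, by norm_num⟩
lemma rep_2 : Rep (2 : K) (false, true, false) := ⟨1, one_ne_zero, by norm_num⟩
lemma rep_m2 : Rep (-2 : K) (true, true, false) := ⟨1, one_ne_zero, by norm_num⟩
lemma rep_5 : Rep (5 : K) (false, false, true) := ⟨1, one_ne_zero, by norm_num⟩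
lemma rep_m5 : Rep (-5 : K) (true, false, true) := ⟨1, one_ne_zero, by norm_num⟩
lemma rep_10 : Rep (10 : K) (false, true, true) := ⟨1, one_ne_zero, by norm_num⟩
lemma rep_m10 : Rep (-10 : K) (true, true, true) := ⟨1, one_ne_zero, by norm_num⟩
lemma rep_m4 : Rep (-4 : K) (true, false, false) := ⟨2, two_ne_zero, by norm_num⟩

lemma rep_sq {s : K} (hs : s ≠ 0) : Rep (s ^ 2) (false, false, false) :=
  ⟨s, hs, by norm_num⟩

set_option maxHeartbeats 2000000 in
lemma rep_mul {x y : K} {a b c d e f : Bool} (h1 : Rep x (a, b, c))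
    (h2 : Rep y (d, e, f)) : Rep (x * y) (xor a d, xor b e, xor c f) := by
  obtain ⟨s, hs, rfl⟩ := h1
  obtain ⟨r, hr, rfl⟩ := h2
  refine ⟨(if b && e then 2 else 1) * ((if c && f then 5 else 1) * (s * r)), ?_, ?_⟩
  · exact mul_ne_zero (by split <;> norm_num)
      (mul_ne_zero (by split <;> norm_num) (mul_ne_zero hs hr))
  · cases a <;> cases b <;> cases c <;> cases d <;> cases e <;> cases f <;>
      simp only [Bool.xor_false, Bool.xor_true, Bool.false_and, Bool.true_and,
        Bool.and_false, Bool.and_true, Bool.not_true, Bool.not_false,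
        Bool.false_eq_true, eq_self_iff_true, if_false, if_true] <;> ring

lemma rep_neg {x : K} {a b c : Bool} (h : Rep x (a, b, c)) :
    Rep (-x) (!a, b, c) := by
  have h' := rep_mul (rep_m1 (K := K)) h
  simp only [Bool.true_xor, Bool.false_xor, neg_one_mul] at h'
  exact h'

lemma rep_inv {x : K} {a b c : Bool} (h : Rep x (a, b, c)) :
    Rep x⁻¹ (a, b, c) := by
  obtain ⟨s, hs, rfl⟩ := h
  set w : K := (if a then (-1 : K) else 1) * (if b then (2:K) else 1) * (if c then (5:K) else 1) with hw
  have hwne : w ≠ 0 := by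
    rw [hw]; cases a <;> cases b <;> cases c <;> norm_num
  refine ⟨(w * s)⁻¹, by simp [hwne, hs], ?_⟩
  rw [← hw]
  field_simp

lemma rep_unique (S : Setup K) {x : K} {t t' : Bool × Bool × Bool}
    (h : Rep x t) (h' : Rep x t') : t = t' :=
  (S.hbasis x (rep_ne h)).unique h h'

lemma rep_exists (S : Setup K) {x : K} (hx : x ≠ 0) : ∃ t, Rep x t :=
  ⟨((S.hbasis x hx).exists).choose, ((S.hbasis x hx).exists).choose_spec⟩


lemma rep_pow {A : K} {a1 a2 a3 : Bool} (hA : Rep A (a1, a2, a3)) (i : ℕ) :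
    ∃ b : Bool, Rep (A ^ i) (b && a1, b && a2, b && a3) := by
  rcases Nat.even_or_odd i with ⟨k, hk⟩ | ⟨k, hk⟩
  · refine ⟨false, ?_⟩
    simp only [Bool.false_and]
    have h2 : A ^ i = (A ^ k) ^ 2 := by rw [hk]; ring
    rw [h2]
    exact rep_sq (pow_ne_zero _ (rep_ne hA))
  · refine ⟨true, ?_⟩
    simp only [Bool.true_and]
    have h2 : A ^ i = A * (A ^ k) ^ 2 := by rw [hk]; ring
    rw [h2]
    have := rep_mul hA (rep_sq (pow_ne_zero k (rep_ne hA)))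
    simpa using this

lemma sp_cases (S : Setup K) {A B x : K} {a1 a2 a3 b1 b2 b3 : Bool}
    (hA : Rep A (a1, a2, a3)) (hB : Rep B (b1, b2, b3)) (hx : x ∈ S.Sp A B) :
    ∃ i j : Bool, Rep x
      (xor (i && a1) (j && b1), xor (i && a2) (j && b2), xor (i && a3) (j && b3)) := by
  rw [S.hSp] at hx
  obtain ⟨i, j, w, hw, rfl⟩ := hx
  obtain ⟨bi, hi⟩ := rep_pow hA i
  obtain ⟨bj, hj⟩ := rep_pow hB j
  have h := rep_mul (rep_mul hi hj) (rep_sq hw)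
  refine ⟨bi, bj, ?_⟩
  simpa using h

lemma n5_cases (S : Setup K) {x : K} (hx : x ∈ S.N 5) :
    ∃ a c, Rep x (a, false, c) := by
  rw [S.h3] at hx
  obtain ⟨i, j, h⟩ := sp_cases S rep_m1 rep_5 hx
  exact ⟨i, j, by simpa using h⟩

lemma nm1_cases (S : Setup K) {x : K} (hx : x ∈ S.N (-1)) :
    ∃ b c, Rep x (false, b, c) := by
  rw [S.h1] at hx
  obtain ⟨i, j, h⟩ := sp_cases S rep_2 rep_5 hx
  exact ⟨i, j, by simpa using h⟩

lemma n2_cases (S : Setup K) {x : K} (hx : x ∈ S.N 2) :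
    ∃ a b, Rep x (a, b, false) := by
  rw [S.h2] at hx
  obtain ⟨i, j, h⟩ := sp_cases S rep_m1 rep_2 hx
  exact ⟨i, j, by simpa using h⟩

lemma n10_cases (S : Setup K) {x : K} (hx : x ∈ S.N 10) :
    ∃ a b, Rep x (a, b, b) := by
  rw [S.h4] at hx
  obtain ⟨i, j, h⟩ := sp_cases S rep_m1 rep_10 hx
  exact ⟨i, j, by simpa using h⟩

lemma nm2_cases (S : Setup K) {x : K} (hx : x ∈ S.N (-2)) :
    ∃ a b, Rep x (a, b, a) := by
  rw [S.h5] at hx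
  obtain ⟨i, j, h⟩ := sp_cases S rep_2 rep_m5 hx
  exact ⟨j, i, by simpa using h⟩

lemma nm5_cases (S : Setup K) {x : K} (hx : x ∈ S.N (-5)) :
    ∃ a b, Rep x (a, a, b) := by
  rw [S.h6] at hx
  obtain ⟨i, j, h⟩ := sp_cases S rep_m2 rep_5 hx
  exact ⟨i, j, by simpa using h⟩

lemma nm10_cases (S : Setup K) {x : K} (hx : x ∈ S.N (-10)) :
    ∃ a b, Rep x (xor a b, a, b) := by
  rw [S.h7] at hx
  obtain ⟨i, j, h⟩ := sp_cases S rep_m2 rep_m5 hx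
  exact ⟨i, j, by simpa using h⟩

lemma n5_of (S : Setup K) {x : K} {a c : Bool} (h : Rep x (a, false, c)) :
    x ∈ S.N 5 := by
  rw [S.h3, S.hSp]
  obtain ⟨s, hs, rfl⟩ := h
  refine ⟨if a then 1 else 0, if c then 1 else 0, s, hs, ?_⟩
  cases a <;> cases c <;> norm_num

lemma mem_form (S : Setup K) (a u v : K) (h : u ^ 2 - a * v ^ 2 ≠ 0) :
    u ^ 2 - a * v ^ 2 ∈ S.N a := by
  rw [S.hN]
  exact ⟨h, u, v, rfl⟩

lemma mem5_ne (S : Setup K) {x : K} (h : x ∈ S.N 5) : x ≠ 0 := by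
  obtain ⟨a, c, hr⟩ := n5_cases S h
  exact rep_ne hr

lemma n5_mul (S : Setup K) {x y : K} (hx : x ∈ S.N 5) (hy : y ∈ S.N 5) :
    x * y ∈ S.N 5 := by
  obtain ⟨a, c, hr⟩ := n5_cases S hx
  obtain ⟨a', c', hr'⟩ := n5_cases S hy
  have := rep_mul hr hr'
  exact n5_of S (by simpa using this)

lemma n5_neg (S : Setup K) {x : K} (hx : x ∈ S.N 5) : -x ∈ S.N 5 := by
  obtain ⟨a, c, hr⟩ := n5_cases S hx
  exact n5_of S (rep_neg hr)

lemma n5_inv (S : Setup K) {x : K} (hx : x ∈ S.N 5) : x⁻¹ ∈ S.N 5 := by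
  obtain ⟨a, c, hr⟩ := n5_cases S hx
  exact n5_of S (rep_inv hr)

lemma sq_mem5 (S : Setup K) {s : K} (hs : s ≠ 0) : s ^ 2 ∈ S.N 5 :=
  n5_of S (rep_sq hs)

lemma one_mem5 (S : Setup K) : (1 : K) ∈ S.N 5 := n5_of S rep_one
lemma m1_mem5 (S : Setup K) : (-1 : K) ∈ S.N 5 := n5_of S rep_m1
lemma five_mem5 (S : Setup K) : (5 : K) ∈ S.N 5 := n5_of S rep_5
lemma m5_mem5 (S : Setup K) : (-5 : K) ∈ S.N 5 := n5_of S rep_m5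
lemma m4_mem5 (S : Setup K) : (-4 : K) ∈ S.N 5 := n5_of S rep_m4

lemma two_not_mem5 (S : Setup K) : (2 : K) ∉ S.N 5 := by
  intro h
  obtain ⟨a, c, hr⟩ := n5_cases S h
  have := rep_unique S hr (rep_2 (K := K))
  simp at this

/-- if y ∈ N 5 then 2*y ∉ N 5 -/
lemma two_mul_not (S : Setup K) {y : K} (hy : y ∈ S.N 5) (h2y : 2 * y ∈ S.N 5) :
    False := by
  obtain ⟨a, c, hr⟩ := n5_cases S hy
  obtain ⟨a', c', hr'⟩ := n5_cases S h2y
  have hm := rep_mul (rep_2 (K := K)) hr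
  have := rep_unique S hr' (by simpa using hm)
  simp [Prod.ext_iff] at this

/-- cancellation: c ∈ N5, c*x ∈ N5 ⇒ x ∈ N5 -/
lemma n5_cancel (S : Setup K) {c x : K} (hc : c ∈ S.N 5) (h : c * x ∈ S.N 5) :
    x ∈ S.N 5 := by
  have hcne : c ≠ 0 := mem5_ne S hc
  have hxne : x ≠ 0 := by
    intro h0
    exact mem5_ne S h (by rw [h0, mul_zero])
  obtain ⟨a, c1, hr⟩ := n5_cases S hc
  obtain ⟨t, hrx⟩ := rep_exists S hxne
  obtain ⟨p, q, r⟩ := t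
  obtain ⟨a', c', hr'⟩ := n5_cases S h
  have hm := rep_mul hr hrx
  have hu := rep_unique S hr' hm
  simp only [Prod.ext_iff] at hu
  have hq : q = false := by
    have h2 := hu.2.1
    simpa using h2.symm
  subst hq
  exact n5_of S hrx

-- END1

/-- 3 ∈ N 5 -/
lemma three_mem5 (S : Setup K) : (3 : K) ∈ S.N 5 := by
  obtain ⟨z, hz0, hz⟩ := S.h35
  exact n5_of S (a := true) (c := true) ⟨z, hz0, by rw [hz]; norm_num⟩

/-- there is q with q^2 = -7 -/
lemma exists_q7 (S : Setup K) : ∃ q : K, q ≠ 0 ∧ (7 : K) = -q ^ 2 := by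
  obtain ⟨z, hz0, hz⟩ := S.h35
  have k7 : (2 : K) ^ 2 - 5 * z ^ 2 = 7 := by linear_combination -hz
  have h7 : (7 : K) ∈ S.N 5 := by
    have := mem_form S 5 2 z (by rw [k7]; norm_num)
    rwa [k7] at this
  obtain ⟨a, c, hq⟩ := n5_cases S h7
  obtain ⟨q, hq0, hqe⟩ := hq
  cases a <;> cases c <;> norm_num at hqe
  · -- 7 = q^2
    exfalso
    have key : q ^ 2 - 5 * (1 : K) ^ 2 = 2 := by linear_combination -hqe
    have := mem_form S 5 q 1 (by rw [key]; norm_num)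
    rw [key] at this
    exact two_not_mem5 S this
  · -- 7 = 5 q^2
    exfalso
    have key : (3 : K) ^ 2 - 5 * q ^ 2 = 2 := by linear_combination hqe
    have := mem_form S 5 3 q (by rw [key]; norm_num)
    rw [key] at this
    exact two_not_mem5 S this
  · -- 7 = -q^2
    exact ⟨q, hq0, by linear_combination hqe⟩
  · -- 7 = -5 q^2
    exfalso
    have key : (3 : K) ^ 2 - (-5) * q ^ 2 = 2 := by linear_combination hqe
    have := mem_form S (-5) 3 q (by rw [key]; norm_num)
    rw [key] at this
    obtain ⟨a, b, hr⟩ := nm5_cases S this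
    have := rep_unique S hr (rep_2 (K := K))
    simp only [Prod.ext_iff] at this
    obtain ⟨u1, u2, -⟩ := this
    rw [u1] at u2
    exact Bool.false_ne_true u2

/-- THE KEY LEMMA: if x ∈ O₁ (with all the toolkit facts) then 5 + x ∈ N 5. -/
lemma key5 (S : Setup K) (x : K) (hx0 : x ≠ 0) (hxn : x ∉ S.N 5)
    (F1p : 1 + x ∈ S.N 5) (F1m : 1 - x ∈ S.N 5) (F2p : 1 + 2 * x ∈ S.N 5)
    (F3p : 1 + 3 * x ∈ S.N 5) (F3m : 1 - 3 * x ∈ S.N 5)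
    (F5p : 1 + 5 * x ∈ S.N 5) (F5m : 1 - 5 * x ∈ S.N 5) :
    5 + x ∈ S.N 5 := by
  obtain ⟨z, hz0, hz⟩ := S.h35
  have h5x0 : (5 : K) + x ≠ 0 := by
    intro h0
    exact hxn (by
      have : x = -5 := by linear_combination h0
      rw [this]; exact m5_mem5 S)
  obtain ⟨a1, c1, h1rep⟩ := n5_cases S F1p
  obtain ⟨t, ht0, ht⟩ := h1rep
  cases a1 <;> cases c1 <;> norm_num at ht
  · -- CASE I : 1 + x = t^2
    obtain ⟨q7, hq70, hq7⟩ := exists_q7 S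
    -- step 1 : 1 + 3x
    obtain ⟨a3, c3, h3rep⟩ := n5_cases S F3p
    obtain ⟨Y, hY0, h3e⟩ := h3rep
    cases a3 <;> cases c3 <;> norm_num at h3e
    · -- 1+3x = Y^2 : good branch, W := Y
      rename_i hW'
      -- step 2 : 1 + 5x
      obtain ⟨a5, c5, h5rep⟩ := n5_cases S F5p
      obtain ⟨M, hM0, h5e⟩ := h5rep
      cases a5 <;> cases c5 <;> norm_num at h5e
      · -- 1+5x = M^2 : good branch; conclude
        obtain ⟨tt, hR⟩ := rep_exists S h5x0
        obtain ⟨A, B, C⟩ := tt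
        -- (i)
        have ki : t ^ 2 - (-1) * 2 ^ 2 = 5 + x := by linear_combination -ht
        have mi := mem_form S (-1) t 2 (by rw [ki]; exact h5x0)
        rw [ki] at mi
        obtain ⟨b1, c1, hri⟩ := nm1_cases S mi
        have e1 := rep_unique S hR hri
        simp only [Prod.ext_iff] at e1
        have hA : A = false := e1.1
        -- (ii)
        have kii : (q7 * t) ^ 2 - (-2) * Y ^ 2 = -(5 + x) := by
          linear_combination t ^ 2 * hq7 + 7 * ht - 2 * h3e
        have mii := mem_form S (-2) (q7 * t) Y
          (by rw [kii]; exact neg_ne_zero.mpr h5x0)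
        rw [kii] at mii
        obtain ⟨a2, b2, hrii⟩ := nm2_cases S mii
        have hRneg := rep_neg hR
        have e2 := rep_unique S hRneg hrii
        simp only [Prod.ext_iff] at e2
        have hC : C = true := by
          rw [e2.2.2, ← e2.1, hA]; rfl
        -- (iii)
        have kiii : M ^ 2 - (-10) * (z * t) ^ 2 = -(5 + x) := by
          linear_combination 2 * t ^ 2 * hz + 6 * ht - h5e
        have miii := mem_form S (-10) M (z * t)
          (by rw [kiii]; exact neg_ne_zero.mpr h5x0)
        rw [kiii] at miii
        obtain ⟨a3, b3, hriii⟩ := nm10_cases S miii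
        have e3 := rep_unique S hRneg hriii
        simp only [Prod.ext_iff] at e3
        have hB : B = false := by
          have h1 := e3.1
          have h2 := e3.2.1
          have h3 := e3.2.2
          rw [hA] at h1
          rw [hC] at h3
          rw [← h2, ← h3] at h1
          simpa using h1.symm
        rw [hB] at hR
        exact n5_of S hR
      · -- 1+5x = 5 M^2 : contradiction
        exfalso
        have key : (2 * Y) ^ 2 - 10 * M ^ 2 = 2 * t ^ 2 := by
          linear_combination -4 * h3e + 2 * h5e + 2 * ht
        have hm := mem_form S 10 (2 * Y) M
          (by rw [key]; exact mul_ne_zero two_ne_zero (pow_ne_zero 2 ht0))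
        rw [key] at hm
        obtain ⟨a, b, hr⟩ := n10_cases S hm
        have hr2 : Rep (2 * t ^ 2) (false, true, false) := by
          have := rep_mul (rep_2 (K := K)) (rep_sq ht0)
          simpa using this
        have := rep_unique S hr hr2
        simp only [Prod.ext_iff] at this
        obtain ⟨-, u2, u3⟩ := this
        rw [u2] at u3
        exact Bool.false_ne_true u3.symm
      · -- 1+5x = -M^2 : contradiction
        exfalso
        have key : M ^ 2 - 5 * (z * t) ^ 2 = 2 * (1 - x) := by
          linear_combination -3 * ht + h5e - t ^ 2 * hz
        have hm := mem_form S 5 M (z * t)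
          (by rw [key]; exact mul_ne_zero two_ne_zero (mem5_ne S F1m))
        rw [key] at hm
        exact two_mul_not S F1m hm
      · -- 1+5x = -5M^2 : contradiction
        exfalso
        have key : (2 * Y) ^ 2 - (-10) * M ^ 2 = 2 * t ^ 2 := by
          linear_combination -4 * h3e + 2 * h5e + 2 * ht
        have hm := mem_form S (-10) (2 * Y) M
          (by rw [key]; exact mul_ne_zero two_ne_zero (pow_ne_zero 2 ht0))
        rw [key] at hm
        obtain ⟨a, b, hr⟩ := nm10_cases S hm
        have hr2 : Rep (2 * t ^ 2) (false, true, false) := by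
          have := rep_mul (rep_2 (K := K)) (rep_sq ht0)
          simpa using this
        have := rep_unique S hr hr2
        simp only [Prod.ext_iff] at this
        obtain ⟨u1, u2, u3⟩ := this
        rw [u2, u3] at u1
        exact Bool.false_ne_true u1.symm
    · -- 1+3x = 5 Y^2 : contradiction
      exfalso
      have key : (5 * z * t) ^ 2 - (-1) * (5 * Y) ^ 2 = -10 := by
        linear_combination 5 * t ^ 2 * hz + 15 * ht - 5 * h3e
      have hm := mem_form S (-1) (5 * z * t) (5 * Y) (by rw [key]; norm_num)
      rw [key] at hm
      obtain ⟨b, c, hr⟩ := nm1_cases S hm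
      have := rep_unique S hr (rep_m10 (K := K))
      simp only [Prod.ext_iff] at this
      exact Bool.false_ne_true this.1
    · -- 1+3x = -Y^2 : contradiction
      exfalso
      have key : Y ^ 2 - 5 * (z * t) ^ 2 = 2 := by
        linear_combination -3 * ht + h3e - t ^ 2 * hz
      have hm := mem_form S 5 Y (z * t) (by rw [key]; norm_num)
      rw [key] at hm
      exact two_not_mem5 S hm
    · -- 1+3x = -5Y^2 : contradiction
      exfalso
      have key : t ^ 2 - 5 * Y ^ 2 = 2 * (1 + 2 * x) := by
        linear_combination -ht - h3e
      have hm := mem_form S 5 t Y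
        (by rw [key]; exact mul_ne_zero two_ne_zero (mem5_ne S F2p))
      rw [key] at hm
      exact two_mul_not S F2p hm
  · -- 1 + x = 5 t^2 : x ∈ N 5, contradiction
    exfalso
    have key : (1 : K) ^ 2 - 5 * t ^ 2 = -x := by linear_combination ht
    have hm := mem_form S 5 1 t (by rw [key]; exact neg_ne_zero.mpr hx0)
    rw [key] at hm
    exact hxn (by simpa using n5_neg S hm)
  ·
    -- CASE II : 1 + x = -t^2
    -- step 1 : 1 - 3x  (need 1-3x = -c^2)
    obtain ⟨a3, c3, h3rep⟩ := n5_cases S F3m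
    obtain ⟨c, hc0, hce⟩ := h3rep
    cases a3 <;> cases c3 <;> norm_num at hce
    · -- 1-3x = c^2 : contradiction
      exfalso
      have key : t ^ 2 - 5 * (z * c) ^ 2 = 2 * (1 - 5 * x) := by
        linear_combination ht - 3 * hce - c ^ 2 * hz
      have hm := mem_form S 5 t (z * c)
        (by rw [key]; exact mul_ne_zero two_ne_zero (mem5_ne S F5m))
      rw [key] at hm
      exact two_mul_not S F5m hm
    · -- 1-3x = 5 c^2 : contradiction (3x ∈ N 5)
      exfalso
      have key : (1 : K) ^ 2 - 5 * c ^ 2 = 3 * x := by linear_combination hce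
      have hm := mem_form S 5 1 c
        (by rw [key]; exact mul_ne_zero three_ne_zero hx0)
      rw [key] at hm
      exact hxn (n5_cancel S (three_mem5 S) hm)
    · -- 1-3x = -c^2 : good branch, proceed
      -- step 2 : 1 + 5x (need 1+5x = -d^2)
      obtain ⟨a5, c5, h5rep⟩ := n5_cases S F5p
      obtain ⟨d, hd0, hde⟩ := h5rep
      cases a5 <;> cases c5 <;> norm_num at hde
      · -- 1+5x = d^2 : contradiction
        exfalso
        have key : d ^ 2 - 5 * (z * t) ^ 2 = -(2 * (1 - x)) := by
          linear_combination 3 * ht - hde - t ^ 2 * hz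
        have hm := mem_form S 5 d (z * t)
          (by rw [key]
              exact neg_ne_zero.mpr (mul_ne_zero two_ne_zero (mem5_ne S F1m)))
        rw [key] at hm
        exact two_mul_not S F1m (by simpa using n5_neg S hm)
      · -- 1+5x = 5 d^2 : contradiction
        exfalso
        have key : c ^ 2 - 5 * d ^ 2 = 2 * t ^ 2 := by
          linear_combination hce + hde - 2 * ht
        have hm := mem_form S 5 c d
          (by rw [key]; exact mul_ne_zero two_ne_zero (pow_ne_zero 2 ht0))
        rw [key] at hm
        exact two_mul_not S (sq_mem5 S ht0) hm
      · -- 1+5x = -d^2 : good branch, proceed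
        -- memberships n1, n2 for 5+x
        obtain ⟨tt, hR⟩ := rep_exists S h5x0
        obtain ⟨A, B, C⟩ := tt
        have hRneg := rep_neg hR
        -- n1 : A = true
        have kn1 : (2 * t) ^ 2 - (-1) * c ^ 2 = -(5 + x) := by
          linear_combination 4 * ht + hce
        have mn1 := mem_form S (-1) (2 * t) c
          (by rw [kn1]; exact neg_ne_zero.mpr h5x0)
        rw [kn1] at mn1
        obtain ⟨b1, c1, hr1⟩ := nm1_cases S mn1
        have e1 := rep_unique S hRneg hr1
        simp only [Prod.ext_iff] at e1
        have hA : A = true := by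
          have := e1.1
          cases A
          · simp at this
          · rfl
        -- n2 : A = xor B C
        have kn2 : d ^ 2 - (-10) * (z * t) ^ 2 = 5 + x := by
          linear_combination 2 * t ^ 2 * hz - 6 * ht + hde
        have mn2 := mem_form S (-10) d (z * t) (by rw [kn2]; exact h5x0)
        rw [kn2] at mn2
        obtain ⟨a2, b2, hr2⟩ := nm10_cases S mn2
        have e2 := rep_unique S hR hr2
        simp only [Prod.ext_iff] at e2
        have hBC : xor B C = true := by
          rw [e2.2.1, e2.2.2, ← e2.1, hA]
        -- step 3 : split on 1+2x
        obtain ⟨ag, cg, hgrep⟩ := n5_cases S F2p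
        obtain ⟨g, hg0, hge⟩ := hgrep
        -- rep of 1-x
        obtain ⟨e5, f5, h1mrep⟩ := n5_cases S F1m
        cases ag <;> cases cg <;> norm_num at hge
        · -- 1+2x = g^2 : forcing C(1-x) = -5 then conclude
          have kf : (2 * g) ^ 2 - 10 * (z * t) ^ 2 = -(2 * (1 - x)) := by
            linear_combination 6 * ht - 4 * hge - 2 * t ^ 2 * hz
          have mf := mem_form S 10 (2 * g) (z * t)
            (by rw [kf]
                exact neg_ne_zero.mpr (mul_ne_zero two_ne_zero (mem5_ne S F1m)))
          rw [kf] at mf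
          obtain ⟨af, bf, hrf⟩ := n10_cases S mf
          have hneg2 : Rep (-(2 * (1 - x))) (!e5, true, f5) := by
            have := rep_neg (rep_mul (rep_2 (K := K)) h1mrep)
            simpa using this
          have ef := rep_unique S hrf hneg2
          simp only [Prod.ext_iff] at ef
          have hf5 : f5 = true := by rw [← ef.2.2]; exact ef.2.1
          rw [hf5] at h1mrep
          obtain ⟨h, hh0, hhe⟩ := h1mrep
          cases e5 <;> norm_num at hhe
          · -- 1-x = 5 h^2 : x ∈ N 5, contradiction
            exfalso
            have key : (1 : K) ^ 2 - 5 * h ^ 2 = x := by linear_combination hhe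
            have hm := mem_form S 5 1 h (by rw [key]; exact hx0)
            rw [key] at hm
            exact hxn hm
          · -- 1-x = -5 h^2 : conclude
            have kg : (5 * z * h) ^ 2 - (-2) * g ^ 2 = 5 + x := by
              linear_combination 5 * h ^ 2 * hz - 3 * hhe - 2 * hge
            have mg := mem_form S (-2) (5 * z * h) g (by rw [kg]; exact h5x0)
            rw [kg] at mg
            obtain ⟨ax, bx, hrx⟩ := nm2_cases S mg
            have ex := rep_unique S hR hrx
            simp only [Prod.ext_iff] at ex
            have hC : C = true := by rw [ex.2.2, ← ex.1]; exact hA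
            have hB : B = false := by
              rw [hC] at hBC
              cases B
              · rfl
              · simp at hBC
            rw [hB] at hR
            exact n5_of S hR
        · -- 1+2x = 5 g^2 : conclude directly
          have kid : -5 * ((z * d) ^ 2 - 2 * (2 * g) ^ 2) = 5 + x := by
            linear_combination 3 * hde - 8 * hge - d ^ 2 * hz
          have hnne : (z * d) ^ 2 - 2 * (2 * g) ^ 2 ≠ 0 := by
            intro h0
            apply h5x0
            rw [← kid, h0, mul_zero]
          have hm := mem_form S 2 (z * d) (2 * g) hnne
          obtain ⟨p, q, hrn⟩ := n2_cases S hm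
          have h5xrep : Rep (5 + x) (xor true p, xor false q, xor true false) := by
            have := rep_mul (rep_m5 (K := K)) hrn
            rwa [kid] at this
          have e4 := rep_unique S hR h5xrep
          simp only [Prod.ext_iff] at e4
          have hC : C = true := by
            have := e4.2.2
            simpa using this
          have hB : B = false := by
            rw [hC] at hBC
            cases B
            · rfl
            · simp at hBC
          rw [hB] at hR
          exact n5_of S hR
        · -- 1+2x = -g^2 : contradiction
          exfalso
          have kf : (2 * g) ^ 2 - (-10) * (z * t) ^ 2 = 2 * (1 - x) := by
            linear_combination 2 * t ^ 2 * hz - 6 * ht + 4 * hge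
          have mf := mem_form S (-10) (2 * g) (z * t)
            (by rw [kf]; exact mul_ne_zero two_ne_zero (mem5_ne S F1m))
          rw [kf] at mf
          obtain ⟨af, bf, hrf⟩ := nm10_cases S mf
          have h2rep : Rep (2 * (1 - x)) (e5, true, f5) := by
            have := rep_mul (rep_2 (K := K)) h1mrep
            simpa using this
          have ef := rep_unique S hrf h2rep
          simp only [Prod.ext_iff] at ef
          -- af = e5 was xor af bf = e5; bf = true; bf = f5... analyze f5
          cases f5
          · -- C(1-x) = ±1 : then 1-x = -h^2 leads to -2 ∈ N(-1)
            have he5 : e5 = true := by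
              have h1 := ef.1
              rw [ef.2.1, ef.2.2] at h1
              simpa using h1.symm
            rw [he5] at h1mrep
            obtain ⟨h, hh0, hhe⟩ := h1mrep
            norm_num at hhe
            -- 1-x = -h^2
            have key : t ^ 2 - (-1) * h ^ 2 = -2 := by
              linear_combination ht + hhe
            have hm2 := mem_form S (-1) t h (by rw [key]; norm_num)
            rw [key] at hm2
            obtain ⟨b9, c9, hr9⟩ := nm1_cases S hm2
            have := rep_unique S hr9 (rep_m2 (K := K))
            simp only [Prod.ext_iff] at this
            exact Bool.false_ne_true this.1
          · -- f5 = true : 1-x = ±5 h^2 ; e5 = false forced, then x ∈ N5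
            have he5 : e5 = false := by
              have h1 := ef.1
              rw [ef.2.1, ef.2.2] at h1
              simpa using h1.symm
            rw [he5] at h1mrep
            obtain ⟨h, hh0, hhe⟩ := h1mrep
            norm_num at hhe
            -- 1-x = 5 h^2 : x ∈ N5, contradiction
            have key : (1 : K) ^ 2 - 5 * h ^ 2 = x := by linear_combination hhe
            have hm2 := mem_form S 5 1 h (by rw [key]; exact hx0)
            rw [key] at hm2
            exact hxn hm2
        · -- 1+2x = -5 g^2 : conclude directly
          have kid : -5 * ((z * d) ^ 2 - (-2) * (2 * g) ^ 2) = 5 + x := by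
            linear_combination 3 * hde - 8 * hge - d ^ 2 * hz
          have hnne : (z * d) ^ 2 - (-2) * (2 * g) ^ 2 ≠ 0 := by
            intro h0
            apply h5x0
            rw [← kid, h0, mul_zero]
          have hm := mem_form S (-2) (z * d) (2 * g) hnne
          obtain ⟨p, q, hrn⟩ := nm2_cases S hm
          have h5xrep : Rep (5 + x) (xor true p, xor false q, xor true p) := by
            have := rep_mul (rep_m5 (K := K)) hrn
            rwa [kid] at this
          have e4 := rep_unique S hR h5xrep
          simp only [Prod.ext_iff] at e4
          have hC : C = true := by
            rw [e4.2.2, ← e4.1]; exact hA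
          have hB : B = false := by
            rw [hC] at hBC
            cases B
            · rfl
            · simp at hBC
          rw [hB] at hR
          exact n5_of S hR
      · -- 1+5x = -5 d^2 : contradiction (forces 1-x square then contradiction)
        exfalso
        have key : (5 * (z * t)) ^ 2 - (-1) * (5 * d) ^ 2 = 10 * (1 - x) := by
          linear_combination 5 * t ^ 2 * hz - 15 * ht + 5 * hde
        have hm := mem_form S (-1) (5 * (z * t)) (5 * d)
          (by rw [key]
              exact mul_ne_zero (by norm_num) (mem5_ne S F1m))
        rw [key] at hm
        obtain ⟨bm, cm, hrm⟩ := nm1_cases S hm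
        obtain ⟨e5, f5, h1mrep⟩ := n5_cases S F1m
        have h10rep : Rep (10 * (1 - x)) (e5, true, !f5) := by
          have := rep_mul (rep_10 (K := K)) h1mrep
          simpa using this
        have em := rep_unique S hrm h10rep
        simp only [Prod.ext_iff] at em
        have he5 : e5 = false := em.1.symm
        rw [he5] at h1mrep
        obtain ⟨h, hh0, hhe⟩ := h1mrep
        cases f5 <;> norm_num at hhe
        · -- 1-x = h^2 : then -(2(1+2x)) ∈ N5, contradiction
          have key2 : h ^ 2 - 5 * (z * t) ^ 2 = -(2 * (1 + 2 * x)) := by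
            linear_combination 3 * ht - hhe - t ^ 2 * hz
          have hm2 := mem_form S 5 h (z * t)
            (by rw [key2]
                exact neg_ne_zero.mpr (mul_ne_zero two_ne_zero (mem5_ne S F2p)))
          rw [key2] at hm2
          exact two_mul_not S F2p (by simpa using n5_neg S hm2)
        · -- 1-x = 5 h^2 : x ∈ N 5, contradiction
          have key2 : (1 : K) ^ 2 - 5 * h ^ 2 = x := by linear_combination hhe
          have hm2 := mem_form S 5 1 h (by rw [key2]; exact hx0)
          rw [key2] at hm2
          exact hxn hm2

    · -- 1-3x = -5 c^2 : contradiction (x ∈ N 5)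
      exfalso
      have key : t ^ 2 - 5 * c ^ 2 = -(4 * x) := by linear_combination ht - hce
      have hm := mem_form S 5 t c
        (by rw [key]
            exact neg_ne_zero.mpr (mul_ne_zero (by norm_num) hx0))
      rw [key] at hm
      have h4x : 4 * x ∈ S.N 5 := by simpa using n5_neg S hm
      have : (4 : K) ∈ S.N 5 := by
        have : (4 : K) = 2 ^ 2 := by norm_num
        rw [this]; exact sq_mem5 S two_ne_zero
      exact hxn (n5_cancel S this h4x)
  · -- 1 + x = -5 t^2 : direct
    have key : (2 : K) ^ 2 - 5 * t ^ 2 = 5 + x := by linear_combination -ht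
    have hm := mem_form S 5 2 t (by rw [key]; exact h5x0)
    rwa [key] at hm

end Stmt13

namespace Stmt13

variable {K : Type*} [Field K] [CharZero K]

/-- derive the toolkit facts from h24 -/
lemma toolkit (S : Setup K)
    (h24 : ∀ y : K, y ∉ S.N 5 → 1 + y ∈ S.N 5 →
      (1 + 2 * y ∈ S.N 5 ∧ 1 + 4 * y ∈ S.N 5))
    (x : K) (hxn : x ∉ S.N 5) (hx1 : 1 + x ∈ S.N 5) :
    1 - x ∈ S.N 5 ∧ 1 + 3 * x ∈ S.N 5 ∧ 1 - 3 * x ∈ S.N 5 ∧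
      1 + 5 * x ∈ S.N 5 ∧ 1 - 5 * x ∈ S.N 5 := by
  have h1xne : (1 : K) + x ≠ 0 := mem5_ne S hx1
  have h2x := h24 x hxn hx1
  -- y1 = -x/(1+x)
  set y1 : K := -x * (1 + x)⁻¹ with hy1def
  have hy1n : y1 ∉ S.N 5 := by
    intro hy
    apply hxn
    have hid : x = -y1 * (1 + x) := by rw [hy1def]; field_simp
    rw [hid]
    exact n5_mul S (n5_neg S hy) hx1
  have hy11 : 1 + y1 ∈ S.N 5 := by
    have hid : 1 + y1 = (1 + x)⁻¹ := by rw [hy1def]; field_simp; ring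
    rw [hid]
    exact n5_inv S hx1
  have hy1 := h24 y1 hy1n hy11
  have F1m : 1 - x ∈ S.N 5 := by
    have hid : 1 - x = (1 + 2 * y1) * (1 + x) := by
      rw [hy1def]; field_simp; ring
    rw [hid]
    exact n5_mul S hy1.1 hx1
  have F3m : 1 - 3 * x ∈ S.N 5 := by
    have hid : 1 - 3 * x = (1 + 4 * y1) * (1 + x) := by
      rw [hy1def]; field_simp; ring
    rw [hid]
    exact n5_mul S hy1.2 hx1
  have h1mne : (1 : K) - x ≠ 0 := mem5_ne S F1m
  -- y2 = x/(1-x)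
  set y2 : K := x * (1 - x)⁻¹ with hy2def
  have hy2n : y2 ∉ S.N 5 := by
    intro hy
    apply hxn
    have hid : x = y2 * (1 - x) := by rw [hy2def]; field_simp
    rw [hid]
    exact n5_mul S hy F1m
  have hy21 : 1 + y2 ∈ S.N 5 := by
    have hid : 1 + y2 = (1 - x)⁻¹ := by
      rw [hy2def]; field_simp; ring
    rw [hid]
    exact n5_inv S F1m
  have hy2 := h24 y2 hy2n hy21
  have F3p : 1 + 3 * x ∈ S.N 5 := by
    have hid : 1 + 3 * x = (1 + 4 * y2) * (1 - x) := by
      rw [hy2def]; field_simp; ring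
    rw [hid]
    exact n5_mul S hy2.2 F1m
  -- y3 = x/(1+x)
  set y3 : K := x * (1 + x)⁻¹ with hy3def
  have hy3n : y3 ∉ S.N 5 := by
    intro hy
    apply hxn
    have hid : x = y3 * (1 + x) := by rw [hy3def]; field_simp
    rw [hid]
    exact n5_mul S hy hx1
  have hy31 : 1 + y3 ∈ S.N 5 := by
    have hid : 1 + y3 = (1 + 2 * x) * (1 + x)⁻¹ := by
      rw [hy3def]; field_simp; ring
    rw [hid]
    exact n5_mul S h2x.1 (n5_inv S hx1)
  have hy3 := h24 y3 hy3n hy31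
  have F5p : 1 + 5 * x ∈ S.N 5 := by
    have hid : 1 + 5 * x = (1 + 4 * y3) * (1 + x) := by
      rw [hy3def]; field_simp; ring
    rw [hid]
    exact n5_mul S hy3.2 hx1
  -- 1 - 2x from h24 applied to -x
  have hmxn : -x ∉ S.N 5 := by
    intro hy
    exact hxn (by simpa using n5_neg S hy)
  have hmx1 : 1 + -x ∈ S.N 5 := by
    have : 1 + -x = 1 - x := by ring
    rw [this]; exact F1m
  have hmx := h24 (-x) hmxn hmx1
  have F2m : 1 - 2 * x ∈ S.N 5 := by
    have : 1 - 2 * x = 1 + 2 * (-x) := by ring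
    rw [this]; exact hmx.1
  -- y4 = -x/(1-x)
  set y4 : K := -x * (1 - x)⁻¹ with hy4def
  have hy4n : y4 ∉ S.N 5 := by
    intro hy
    apply hxn
    have hid : x = -y4 * (1 - x) := by rw [hy4def]; field_simp
    rw [hid]
    exact n5_mul S (n5_neg S hy) F1m
  have hy41 : 1 + y4 ∈ S.N 5 := by
    have hid : 1 + y4 = (1 - 2 * x) * (1 - x)⁻¹ := by
      rw [hy4def]; field_simp; ring
    rw [hid]
    exact n5_mul S F2m (n5_inv S F1m)
  have hy4 := h24 y4 hy4n hy41
  have F5m : 1 - 5 * x ∈ S.N 5 := by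
    have hid : 1 - 5 * x = (1 + 4 * y4) * (1 - x) := by
      rw [hy4def]; field_simp; ring
    rw [hid]
    exact n5_mul S hy4.2 F1m
  exact ⟨F1m, F3p, F3m, F5p, F5m⟩

end Stmt13

/-- Under the ℚ₂-norm-lattice hypotheses, if 1 + 2x, 1 + 4x ∈ N(5) for every
x ∈ O₁ = {x : x ∉ N(5), 1 + x ∈ N(5)}, then O₁ is closed under
multiplication by -1, 5 and 1/5. -/
theorem stmt_13 (K : Type*) [Field K] [CharZero K]
    (N : K → Set K)
    (hN : ∀ a : K, N a = {x : K | x ≠ 0 ∧ ∃ u v : K, x = u ^ 2 - a * v ^ 2})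
    (Sp : K → K → Set K)
    (hSp : ∀ a b : K, Sp a b =
      {x : K | ∃ (i j : ℕ) (z : K), z ≠ 0 ∧ x = a ^ i * b ^ j * z ^ 2})
    (hbasis : ∀ x : K, x ≠ 0 → ∃! t : Bool × Bool × Bool, ∃ z : K, z ≠ 0 ∧
      x = (if t.1 then (-1 : K) else 1) * (if t.2.1 then 2 else 1) *
          (if t.2.2 then 5 else 1) * z ^ 2)
    (h1 : N (-1) = Sp 2 5) (h2 : N 2 = Sp (-1) 2) (h3 : N 5 = Sp (-1) 5)
    (h4 : N 10 = Sp (-1) 10) (h5 : N (-2) = Sp 2 (-5)) (h6 : N (-5) = Sp (-2) 5)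
    (h7 : N (-10) = Sp (-2) (-5))
    (hidx : ∀ a ∈ ({-1, 2, 5, 10, -2, -5, -10} : Set K),
      ∀ x y : K, x ≠ 0 → y ≠ 0 → x ∉ N a → y ∉ N a → x * y ∈ N a)
    (h35 : ∃ z : K, z ≠ 0 ∧ (3 : K) = -5 * z ^ 2)
    (h24 : ∀ x ∈ {x : K | x ∉ N 5 ∧ 1 + x ∈ N 5},
      1 + 2 * x ∈ N 5 ∧ 1 + 4 * x ∈ N 5) :
    ∀ x ∈ {x : K | x ∉ N 5 ∧ 1 + x ∈ N 5},
      (-x) ∈ {x : K | x ∉ N 5 ∧ 1 + x ∈ N 5} ∧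
      (5 * x) ∈ {x : K | x ∉ N 5 ∧ 1 + x ∈ N 5} ∧
      (x / 5) ∈ {x : K | x ∉ N 5 ∧ 1 + x ∈ N 5} := by
  intro x hx
  set S : Stmt13.Setup K := ⟨N, Sp, hN, hSp, hbasis, h1, h2, h3, h4, h5, h6, h7, h35⟩
    with hSdef
  have hxn : x ∉ S.N 5 := hx.1
  have hx1 : 1 + x ∈ S.N 5 := hx.2
  have h24' : ∀ y : K, y ∉ S.N 5 → 1 + y ∈ S.N 5 →
      (1 + 2 * y ∈ S.N 5 ∧ 1 + 4 * y ∈ S.N 5) := fun y hn h1y => h24 y ⟨hn, h1y⟩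
  obtain ⟨F1m, F3p, F3m, F5p, F5m⟩ := Stmt13.toolkit S h24' x hxn hx1
  have F2p : 1 + 2 * x ∈ S.N 5 := (h24' x hxn hx1).1
  refine ⟨⟨?_, ?_⟩, ⟨?_, ?_⟩, ⟨?_, ?_⟩⟩
  · -- -x ∉ N 5
    intro hy
    exact hxn (by simpa using Stmt13.n5_neg S hy)
  · -- 1 + -x ∈ N 5
    have : 1 + -x = 1 - x := by ring
    rw [this]; exact F1m
  · -- 5x ∉ N 5
    intro hy
    exact hxn (Stmt13.n5_cancel S (Stmt13.five_mem5 S) hy)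
  · -- 1 + 5x ∈ N 5
    exact F5p
  · -- x/5 ∉ N 5
    intro hy
    apply hxn
    have hid : x = 5 * (x / 5) := by field_simp
    rw [hid]
    exact Stmt13.n5_mul S (Stmt13.five_mem5 S) hy
  · -- 1 + x/5 ∈ N 5
    rcases eq_or_ne x 0 with rfl | hx0
    · have : (1 : K) + 0 / 5 = 1 := by norm_num
      rw [this]
      exact Stmt13.one_mem5 S
    · have h5x := Stmt13.key5 S x hx0 hxn hx1 F1m F2p F3p F3m F5p F5m
      have hid : 1 + x / 5 = (5 + x) * (5 : K)⁻¹ := by field_simp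
      rw [hid]
      exact Stmt13.n5_mul S h5x (Stmt13.n5_inv S (Stmt13.five_mem5 S))
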